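/- arXiv:0712.3402 — 4 statements merged into one kernel-verified Lean document; each statement's English description precedes it below -/
import Mathlib

section
/- For two symmetric positive definite real matrices K and L of the same size, det((K+L)/2) ≥ det(K)^{1/2} · det(L)^{1/2}. -/
private lemma sqrt_le_half_add (x : ℝ) (hx : 0 ≤ x) : Real.sqrt x ≤ (1 + x) / 2 := by
  nlinarith [Real.sq_sqrt hx, Real.sqrt_nonneg x, sq_nonneg (Real.sqrt x - 1)]

theorem det_avg_ge_sqrt_det_mul_sqrt_det {n : ℕ}
    (K L : Matrix (Fin n) (Fin n) ℝ) (hK : K.PosDef) (hL : L.PosDef) :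
    Real.sqrt K.det * Real.sqrt L.det ≤ ((K + L) / 2).det := by
  classical
  -- reduce division by 2 to scalar smul
  have h1 : ((2:ℝ) • (1 : Matrix (Fin n) (Fin n) ℝ)) = 2 := by
    rw [two_smul, one_add_one_eq_two]
  have h2 : (2 : Matrix (Fin n) (Fin n) ℝ)⁻¹ = (2⁻¹:ℝ) • (1 : Matrix (Fin n) (Fin n) ℝ) := by
    apply Matrix.inv_eq_right_inv
    rw [Matrix.mul_smul, Matrix.mul_one, ← h1, smul_smul]
    norm_num
  have hdiv : ((K + L) / 2) = (2⁻¹:ℝ) • (K + L) := by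
    rw [div_eq_mul_inv, h2, Matrix.mul_smul, Matrix.mul_one]
  -- square root of K
  open scoped MatrixOrder in
  set S := CFC.sqrt K with hSdef
  open scoped MatrixOrder in
  have hS : S.PosSemidef := Matrix.nonneg_iff_posSemidef.mp (CFC.sqrt_nonneg K)
  open scoped MatrixOrder in
  have hS2 : S * S = K := CFC.sqrt_mul_sqrt_self K hK.posSemidef.nonneg
  have hdetK : 0 < K.det := hK.det_pos
  have hdetL : 0 < L.det := hL.det_pos
  have hdetS2 : S.det * S.det = K.det := by rw [← Matrix.det_mul, hS2]
  have hdetS : S.det ≠ 0 := by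
    intro h; rw [h, zero_mul] at hdetS2; exact hdetK.ne hdetS2
  have hSu : IsUnit S.det := hdetS.isUnit
  have hSinv : S * S⁻¹ = 1 := Matrix.mul_nonsing_inv _ hSu
  have hSinv' : S⁻¹ * S = 1 := Matrix.nonsing_inv_mul _ hSu
  set M := S⁻¹ * L * S⁻¹ with hMdef
  have hMps : M.PosSemidef := by
    have h := hL.posSemidef.mul_mul_conjTranspose_same S⁻¹
    have hherm : (S⁻¹).conjTranspose = S⁻¹ := hS.isHermitian.inv
    rwa [hherm] at h
  -- key identity
  have hSMS : S * M * S = L := by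
    rw [hMdef, ← Matrix.mul_assoc, ← Matrix.mul_assoc, hSinv, Matrix.one_mul,
      Matrix.mul_assoc, hSinv', Matrix.mul_one]
  have key : K + L = S * (1 + M) * S := by
    rw [Matrix.mul_add, Matrix.mul_one, Matrix.add_mul, hS2, hSMS]
  -- determinant of 1 + M via spectral theorem
  have hMH : M.IsHermitian := hMps.isHermitian
  set μ := hMH.eigenvalues with hμdef
  set U := (hMH.eigenvectorUnitary : Matrix (Fin n) (Fin n) ℝ) with hUdef
  have hUU : U * star U = 1 := Matrix.mem_unitaryGroup_iff.mp hMH.eigenvectorUnitary.2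
  have hspec : M = U * Matrix.diagonal (RCLike.ofReal ∘ μ) * star U := hMH.spectral_theorem
  have hone : (1 : Matrix (Fin n) (Fin n) ℝ) = U * 1 * star U := by
    rw [Matrix.mul_one, hUU]
  have h1M : 1 + M = U * (1 + Matrix.diagonal (RCLike.ofReal ∘ μ)) * star U := by
    rw [Matrix.mul_add, Matrix.add_mul]
    nth_rewrite 1 [hone]
    rw [← hspec]
  have hdetU : U.det * (star U).det = 1 := by
    rw [← Matrix.det_mul, hUU, Matrix.det_one]
  have hdiag : (1 : Matrix (Fin n) (Fin n) ℝ) + Matrix.diagonal (RCLike.ofReal ∘ μ) =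
      Matrix.diagonal (fun i => 1 + μ i) := by
    rw [← Matrix.diagonal_one, Matrix.diagonal_add]
    rfl
  have hdet1M : (1 + M).det = ∏ i, (1 + μ i) := by
    rw [h1M, Matrix.det_mul, Matrix.det_mul, mul_comm, ← mul_assoc, mul_comm (star U).det,
      hdetU, one_mul, hdiag, Matrix.det_diagonal]
  have hdetM : M.det = ∏ i, μ i := by
    simpa using hMH.det_eq_prod_eigenvalues
  have hμnn : ∀ i, 0 ≤ μ i := fun i => hMps.eigenvalues_nonneg i
  -- det M = det L / det K
  have hdetMval : M.det = L.det / K.det := by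
    rw [hMdef, Matrix.det_mul, Matrix.det_mul, Matrix.det_nonsing_inv]
    field_simp [← hdetS2]
    rw [Ring.inverse_eq_inv', ← hdetS2]
    field_simp
  -- sqrt of det M as a product
  have hsqrt_prod : Real.sqrt M.det = ∏ i, Real.sqrt (μ i) := by
    rw [hdetM, show (∏ i, μ i) = (∏ i, Real.sqrt (μ i))^2 by
      rw [sq, ← Finset.prod_mul_distrib]
      exact Finset.prod_congr rfl fun i _ => (Real.mul_self_sqrt (hμnn i)).symm]
    exact Real.sqrt_sq (Finset.prod_nonneg fun i _ => Real.sqrt_nonneg _)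
  have hprod_le : (∏ i, Real.sqrt (μ i)) ≤ ∏ i, ((1 + μ i)/2) :=
    Finset.prod_le_prod (fun i _ => Real.sqrt_nonneg _)
      (fun i _ => sqrt_le_half_add _ (hμnn i))
  -- determinant of the average
  have hdetKL : (K + L).det = K.det * (1 + M).det := by
    rw [key, Matrix.det_mul, Matrix.det_mul, ← hdetS2]
    ring
  have hfinal : ((K + L)/2).det = K.det * ∏ i, ((1 + μ i)/2) := by
    rw [hdiv, Matrix.det_smul, hdetKL, hdet1M, Finset.prod_div_distrib,
      Finset.prod_const, Finset.card_univ, Fintype.card_fin]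
    field_simp
    rw [mul_right_comm, ← mul_pow]
    norm_num
  -- the scalar identity
  have hscal : K.det * Real.sqrt M.det = Real.sqrt K.det * Real.sqrt L.det := by
    rw [hdetMval, Real.sqrt_div hdetL.le]
    have ha : (0:ℝ) < Real.sqrt K.det := Real.sqrt_pos.mpr hdetK
    have haa : Real.sqrt K.det * Real.sqrt K.det = K.det := Real.mul_self_sqrt hdetK.le
    field_simp
    linear_combination (-1 : ℝ) * haa
  calc Real.sqrt K.det * Real.sqrt L.det = K.det * Real.sqrt M.det := hscal.symm
    _ = K.det * ∏ i, Real.sqrt (μ i) := by rw [hsqrt_prod]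
    _ ≤ K.det * ∏ i, ((1 + μ i)/2) := mul_le_mul_of_nonneg_left hprod_le hdetK.le
    _ = ((K + L)/2).det := hfinal.symm
end

section
/- The Bhattacharyya kernel k_B(K,L) = det(K)^{1/2} · det(L)^{1/2} · det((K+L)/2)^{-1}, defined on symmetric positive definite matrices, satisfies 0 < k_B(K,L) ≤ 1 for all symmetric positive definite K, L. -/
open Matrix
open scoped MatrixOrder

private lemma bhat_sqrtProd {ι : Type*} (s : Finset ι) (f : ι → ℝ) (hf : ∀ i ∈ s, 0 ≤ f i) :
    Real.sqrt (∏ i ∈ s, f i) = ∏ i ∈ s, Real.sqrt (f i) := by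
  induction s using Finset.cons_induction with
  | empty => simp
  | cons a s ha ih =>
      rw [Finset.prod_cons, Finset.prod_cons, Real.sqrt_mul (hf a (Finset.mem_cons_self a s)),
        ih fun i hi => hf i (Finset.mem_cons_of_mem hi)]

private lemma bhat_det_one_add {n : ℕ} {M : Matrix (Fin n) (Fin n) ℝ} (hH : M.IsHermitian) :
    (1 + M).det = ∏ i, (1 + hH.eigenvalues i) := by
  have h1 : (1 : Matrix (Fin n) (Fin n) ℝ) + M =
      (hH.eigenvectorUnitary : Matrix (Fin n) (Fin n) ℝ) *
        diagonal (fun i => 1 + hH.eigenvalues i) *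
        (star hH.eigenvectorUnitary : Matrix (Fin n) (Fin n) ℝ) := by
    have hU : (hH.eigenvectorUnitary : Matrix (Fin n) (Fin n) ℝ) *
        (star hH.eigenvectorUnitary : Matrix (Fin n) (Fin n) ℝ) = 1 :=
      (Matrix.mem_unitaryGroup_iff).mp hH.eigenvectorUnitary.2
    have hspec := hH.spectral_theorem
    calc (1 : Matrix (Fin n) (Fin n) ℝ) + M
        = (hH.eigenvectorUnitary : Matrix (Fin n) (Fin n) ℝ) *
            (1 + diagonal (RCLike.ofReal ∘ hH.eigenvalues)) *
            (star hH.eigenvectorUnitary : Matrix (Fin n) (Fin n) ℝ) := by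
          rw [Matrix.mul_add, Matrix.add_mul, Matrix.mul_one, hU]
          conv_lhs => rw [hspec]
          rfl
      _ = _ := by
          congr 1
          congr 1
          rw [← Matrix.diagonal_one, Matrix.diagonal_add]
          rfl
  rw [h1, Matrix.det_mul_right_comm]
  simp [Matrix.det_diagonal]

private lemma bhat_key {n : ℕ} {M : Matrix (Fin n) (Fin n) ℝ} (hM : M.PosSemidef) :
    2 ^ n * Real.sqrt M.det ≤ (1 + M).det := by
  have hH := hM.1
  have hdet : M.det = ∏ i, hH.eigenvalues i := by
    simpa using hH.det_eq_prod_eigenvalues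
  rw [bhat_det_one_add hH, hdet, bhat_sqrtProd _ _ (fun i _ => hM.eigenvalues_nonneg i)]
  calc (2:ℝ) ^ n * ∏ i, Real.sqrt (hH.eigenvalues i)
      = ∏ i : Fin n, 2 * Real.sqrt (hH.eigenvalues i) := by
        rw [Finset.prod_mul_distrib]; simp
    _ ≤ ∏ i, (1 + hH.eigenvalues i) := by
        apply Finset.prod_le_prod
        · intro i _; positivity
        · intro i _
          have h := Real.sq_sqrt (hM.eigenvalues_nonneg i)
          nlinarith [Real.sqrt_nonneg (hH.eigenvalues i),
            sq_nonneg (1 - Real.sqrt (hH.eigenvalues i))]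

noncomputable def bhattacharyya {n : ℕ} (K L : Matrix (Fin n) (Fin n) ℝ) : ℝ :=
  Real.sqrt K.det * Real.sqrt L.det * (((K + L) / 2).det)⁻¹

theorem bhattacharyya_pos_le_one {n : ℕ}
    (K L : Matrix (Fin n) (Fin n) ℝ) (hK : K.PosDef) (hL : L.PosDef) :
    0 < bhattacharyya K L ∧ bhattacharyya K L ≤ 1 := by
  have ha : 0 < K.det := hK.det_pos
  have hb : 0 < L.det := hL.det_pos
  set S := CFC.sqrt K with hSdef
  have hS2 : S * S = K := CFC.sqrt_mul_sqrt_self K hK.posSemidef.nonneg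
  have hSps : S.PosSemidef := (CFC.sqrt_nonneg K).posSemidef
  have hSd : S.det ≠ 0 := by
    intro h
    have : K.det = 0 := by rw [← hS2, Matrix.det_mul, h, mul_zero]
    exact ha.ne' this
  have hSu : IsUnit S.det := isUnit_iff_ne_zero.mpr hSd
  have hSH : S.IsHermitian := hSps.1
  have hSinvH : (S⁻¹)ᴴ = S⁻¹ := by rw [Matrix.conjTranspose_nonsing_inv, hSH.eq]
  set M := S⁻¹ * L * S⁻¹ with hMdef
  have hM : M.PosSemidef := by
    have := hL.posSemidef.mul_mul_conjTranspose_same S⁻¹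
    rwa [hSinvH] at this
  have hdetM : M.det = L.det / K.det := by
    rw [hMdef, Matrix.det_mul, Matrix.det_mul, Matrix.det_nonsing_inv, ← hS2, Matrix.det_mul]
    field_simp
    rw [Ring.inverse_eq_inv, ← mul_pow, inv_mul_cancel₀ hSd, one_pow]
  have hKL : K + L = S * (1 + M) * S := by
    have hSinv : S * S⁻¹ = 1 := Matrix.mul_nonsing_inv S hSu
    rw [hMdef, Matrix.mul_add, Matrix.add_mul, Matrix.mul_one, hS2]
    congr 1
    rw [← Matrix.mul_assoc, ← Matrix.mul_assoc, hSinv, Matrix.one_mul, Matrix.mul_assoc,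
      Matrix.nonsing_inv_mul S hSu, Matrix.mul_one]
  have hdetKL : (K + L).det = K.det * (1 + M).det := by
    rw [hKL, Matrix.det_mul, Matrix.det_mul, mul_comm, ← mul_assoc, ← Matrix.det_mul, hS2]
  have hmain : 2 ^ n * (Real.sqrt K.det * Real.sqrt L.det) ≤ (K + L).det := by
    have h := bhat_key hM
    have hle : K.det * (2 ^ n * Real.sqrt M.det) ≤ K.det * (1 + M).det :=
      mul_le_mul_of_nonneg_left h ha.le
    rw [← hdetKL] at hle
    refine le_trans (le_of_eq ?_) hle
    rw [hdetM, Real.sqrt_div hb.le]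
    have hsa : Real.sqrt K.det ≠ 0 := ne_of_gt (Real.sqrt_pos.mpr ha)
    have hms : Real.sqrt K.det * Real.sqrt K.det = K.det := Real.mul_self_sqrt ha.le
    field_simp
    linear_combination hms
  have hhalf : ((K + L) / 2 : Matrix (Fin n) (Fin n) ℝ) = (2⁻¹ : ℝ) • (K + L) := by
    have h2 : (2 : Matrix (Fin n) (Fin n) ℝ)⁻¹ = (2⁻¹ : ℝ) • 1 := by
      apply Matrix.inv_eq_right_inv
      rw [mul_smul_comm, Matrix.mul_one]
      have h22 : (2 : Matrix (Fin n) (Fin n) ℝ) = 1 + 1 := by norm_num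
      ext i j
      by_cases h : i = j <;>
        simp [h22, Matrix.add_apply, Matrix.one_apply, h] <;> norm_num
    rw [div_eq_mul_inv, h2, mul_smul_comm, Matrix.mul_one]
  have hd : ((K + L) / 2).det = (2⁻¹ : ℝ) ^ n * (K + L).det := by
    rw [hhalf, Matrix.det_smul]
    simp
  have hdge : Real.sqrt K.det * Real.sqrt L.det ≤ ((K + L) / 2).det := by
    rw [hd]
    have := mul_le_mul_of_nonneg_left hmain (by positivity : (0:ℝ) ≤ (2⁻¹:ℝ) ^ n)
    calc Real.sqrt K.det * Real.sqrt L.det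
        = (2⁻¹:ℝ) ^ n * (2 ^ n * (Real.sqrt K.det * Real.sqrt L.det)) := by
          rw [← mul_assoc, ← mul_pow]
          norm_num
      _ ≤ (2⁻¹:ℝ) ^ n * (K + L).det := this
  have hpos : 0 < Real.sqrt K.det * Real.sqrt L.det := by positivity
  have hdpos : 0 < ((K + L) / 2).det := lt_of_lt_of_le hpos hdge
  constructor
  · exact mul_pos hpos (inv_pos.mpr hdpos)
  · rw [bhattacharyya, ← div_eq_mul_inv, div_le_one hdpos]
    exact hdge
end

section
/- The Bhattacharyya kernel k_B(K,L) = det(K)^{1/2} det(L)^{1/2} det((K+L)/2)^{-1} equals 1 if and only if K = L, for symmetric positive definite matrices K and L. -/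
open Matrix Finset

private lemma div_two_eq {n : ℕ} (A : Matrix (Fin n) (Fin n) ℝ) :
    A / 2 = (2⁻¹ : ℝ) • A := by
  rw [div_eq_mul_inv, Matrix.inv_eq_right_inv (B := (2⁻¹:ℝ) • (1 : Matrix (Fin n) (Fin n) ℝ))
    (by rw [mul_smul_comm, mul_one, show (2 : Matrix (Fin n) (Fin n) ℝ) = (2:ℝ) • 1 by
          rw [two_smul]; exact (one_add_one_eq_two).symm,
          smul_smul]
        norm_num), mul_smul_comm, mul_one]

/-- conjugation of a positive definite matrix by an invertible matrix is positive definite -/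
private lemma posDef_conj {n : ℕ} {A B : Matrix (Fin n) (Fin n) ℝ} (hA : A.PosDef)
    (hB : IsUnit B.det) : (Bᴴ * A * B).PosDef := by
  refine Matrix.PosDef.of_dotProduct_mulVec_pos (isHermitian_conjTranspose_mul_mul B hA.1) fun x hx => ?_
  have hBx : B *ᵥ x ≠ 0 := by
    intro h
    apply hx
    have := congrArg (fun v => B⁻¹ *ᵥ v) h
    simpa [Matrix.mulVec_mulVec, Matrix.nonsing_inv_mul B hB] using this
  have key : dotProduct (star x) ((Bᴴ * A * B) *ᵥ x)
      = dotProduct (star (B *ᵥ x)) (A *ᵥ (B *ᵥ x)) := by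
    rw [← Matrix.mulVec_mulVec, ← Matrix.mulVec_mulVec, Matrix.dotProduct_mulVec,
      star_mulVec (M := B) (v := x)]
  rw [key]
  exact hA.dotProduct_mulVec_pos hBx

/-- a Hermitian matrix whose eigenvalues are all 1 is the identity -/
private lemma eq_one_of_eigenvalues {n : ℕ} {M : Matrix (Fin n) (Fin n) ℝ}
    (hM : M.IsHermitian) (h : ∀ i, hM.eigenvalues i = 1) : M = 1 := by
  have hd : diagonal (RCLike.ofReal ∘ hM.eigenvalues) = (1 : Matrix (Fin n) (Fin n) ℝ) := by
    rw [show (RCLike.ofReal ∘ hM.eigenvalues : Fin n → ℝ) = fun _ => 1 by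
      funext i; simp [h i]]
    exact Matrix.diagonal_one
  calc M = (hM.eigenvectorUnitary : Matrix (Fin n) (Fin n) ℝ)
        * diagonal (RCLike.ofReal ∘ hM.eigenvalues)
        * (star hM.eigenvectorUnitary : Matrix (Fin n) (Fin n) ℝ) := hM.spectral_theorem
    _ = 1 := by
        rw [hd, mul_one]
        exact (Matrix.mem_unitaryGroup_iff).mp hM.eigenvectorUnitary.2

private lemma forall_eq_of_prod_eq {ι : Type*} {s : Finset ι} {f g : ι → ℝ}
    (h0 : ∀ i ∈ s, 0 < f i) (hle : ∀ i ∈ s, f i ≤ g i)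
    (heq : ∏ i ∈ s, f i = ∏ i ∈ s, g i) : ∀ i ∈ s, f i = g i := by
  intro i hi
  by_contra hne
  exact absurd heq
    (ne_of_lt (Finset.prod_lt_prod h0 hle ⟨i, hi, lt_of_le_of_ne (hle i hi) hne⟩))

private lemma sqrt_prod_aux {n : ℕ} {f : Fin n → ℝ} (hf : ∀ i, 0 ≤ f i) :
    Real.sqrt (∏ i, f i) = ∏ i, Real.sqrt (f i) := by
  classical
  induction (Finset.univ : Finset (Fin n)) using Finset.cons_induction with
  | empty => simp
  | cons a s ha ih =>
    rw [Finset.prod_cons, Finset.prod_cons, Real.sqrt_mul (hf a), ih]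

private lemma det_one_add {n : ℕ} {M : Matrix (Fin n) (Fin n) ℝ} (hM : M.IsHermitian) :
    (1 + M).det = ∏ i, (1 + hM.eigenvalues i) := by
  have hU := (Matrix.mem_unitaryGroup_iff).mp hM.eigenvectorUnitary.2
  have h1 : (1 : Matrix (Fin n) (Fin n) ℝ) + M
      = (hM.eigenvectorUnitary : Matrix (Fin n) (Fin n) ℝ)
        * (1 + diagonal (RCLike.ofReal ∘ hM.eigenvalues))
        * (star hM.eigenvectorUnitary : Matrix (Fin n) (Fin n) ℝ) := by
    rw [mul_add, add_mul, mul_one, hU]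
    exact congrArg _ hM.spectral_theorem
  rw [h1, Matrix.det_mul_right_comm, hU, one_mul,
    ← Matrix.diagonal_one, Matrix.diagonal_add, Matrix.det_diagonal]
  simp

/-- Key lemma: positive definite matrix with det((1+M)/2) = sqrt(det M) is the identity. -/
private lemma key_lemma {n : ℕ} {M : Matrix (Fin n) (Fin n) ℝ} (hM : M.PosDef)
    (h : (2⁻¹ : ℝ) ^ n * (1 + M).det = Real.sqrt M.det) : M = 1 := by
  have hev := hM.eigenvalues_pos
  have hdet : M.det = ∏ i, hM.1.eigenvalues i := by
    simpa using hM.1.det_eq_prod_eigenvalues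
  have hsqrt : Real.sqrt M.det = ∏ i, Real.sqrt (hM.1.eigenvalues i) := by
    rw [hdet]
    exact sqrt_prod_aux (fun i => (hev i).le)
  rw [hsqrt, det_one_add hM.1, show ((2⁻¹:ℝ)^n) = ∏ _i : Fin n, (2⁻¹:ℝ) by simp,
    ← Finset.prod_mul_distrib] at h
  have heach : ∀ i ∈ Finset.univ, Real.sqrt (hM.1.eigenvalues i)
      = 2⁻¹ * (1 + hM.1.eigenvalues i) := by
    refine forall_eq_of_prod_eq (fun i _ => Real.sqrt_pos.mpr (hev i)) (fun i _ => ?_) h.symm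
    nlinarith [Real.sq_sqrt (hev i).le, Real.sqrt_nonneg (hM.1.eigenvalues i),
      sq_nonneg (Real.sqrt (hM.1.eigenvalues i) - 1)]
  refine eq_one_of_eigenvalues hM.1 (fun i => ?_)
  have := heach i (Finset.mem_univ i)
  nlinarith [Real.sq_sqrt (hev i).le, Real.sqrt_nonneg (hM.1.eigenvalues i),
    sq_nonneg (Real.sqrt (hM.1.eigenvalues i) - 1)]

open scoped MatrixOrder in
private lemma main_lemma {n : ℕ} {K L : Matrix (Fin n) (Fin n) ℝ}
    (hK : K.PosDef) (hL : L.PosDef)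
    (h : ((K + L) / 2).det = Real.sqrt K.det * Real.sqrt L.det) : K = L := by
  set S := CFC.sqrt K with hSdef
  have hS : S.PosSemidef := (CFC.sqrt_nonneg K).posSemidef
  have hSS : S * S = K := CFC.sqrt_mul_sqrt_self K hK.posSemidef.nonneg
  have hdetS : S.det * S.det = K.det := by rw [← Matrix.det_mul, hSS]
  have hdetSne : IsUnit S.det := by
    refine isUnit_iff_ne_zero.mpr (fun h0 => ?_)
    rw [h0, zero_mul] at hdetS
    exact hK.det_pos.ne hdetS
  have hSH : Sᴴ = S := hS.isHermitian
  have hSinv : S⁻¹ * S = 1 := Matrix.nonsing_inv_mul S hdetSne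
  have hSinv' : S * S⁻¹ = 1 := Matrix.mul_nonsing_inv S hdetSne
  have hSinvH : (S⁻¹)ᴴ = S⁻¹ := by rw [Matrix.conjTranspose_nonsing_inv, hSH]
  set M := S⁻¹ * L * S⁻¹ with hMdef
  have hMpos : M.PosDef := by
    have := posDef_conj hL (B := S⁻¹) (by
      rw [Matrix.det_nonsing_inv]; exact isUnit_ringInverse.mpr hdetSne)
    rwa [hSinvH] at this
  have hLM : S * M * S = L := by
    rw [hMdef, ← mul_assoc, ← mul_assoc, hSinv', one_mul, mul_assoc, hSinv, mul_one]
  have hKL : K + L = S * (1 + M) * S := by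
    rw [mul_add, add_mul, mul_one, hSS, hLM]
  have hdetKL : ((K + L) / 2).det = (2⁻¹:ℝ)^n * (1 + M).det * K.det := by
    rw [div_two_eq, Matrix.det_smul, hKL, Matrix.det_mul, Matrix.det_mul]
    simp only [Fintype.card_fin]
    rw [show S.det * (1+M).det * S.det = S.det * S.det * (1+M).det by ring, hdetS]
    ring
  have hdetL : L.det = M.det * K.det := by
    rw [← hLM, Matrix.det_mul, Matrix.det_mul,
      show S.det * M.det * S.det = S.det * S.det * M.det by ring, hdetS]
    ring
  have hsK : Real.sqrt K.det * Real.sqrt K.det = K.det :=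
    Real.mul_self_sqrt hK.det_pos.le
  have hrhs : Real.sqrt K.det * Real.sqrt L.det = Real.sqrt M.det * K.det := by
    rw [hdetL, Real.sqrt_mul hMpos.det_pos.le, ← mul_assoc,
      mul_comm (Real.sqrt K.det) (Real.sqrt M.det), mul_assoc, hsK]
  have hM1 : M = 1 := by
    apply key_lemma hMpos
    have := h
    rw [hdetKL, hrhs] at this
    exact mul_right_cancel₀ hK.det_pos.ne' this
  rw [← hLM, hM1, mul_one, hSS]

theorem bhattacharyya_eq_one_iff {n : ℕ}
    (K L : Matrix (Fin n) (Fin n) ℝ) (hK : K.PosDef) (hL : L.PosDef) :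
    bhattacharyya K L = 1 ↔ K = L := by
  have hKL : (K + L).PosDef := hK.add hL
  have hdet2 : ((K + L) / 2).det = (2⁻¹:ℝ)^n * (K + L).det := by
    rw [div_two_eq, Matrix.det_smul, Fintype.card_fin]
  have hdetpos : 0 < ((K + L) / 2).det := by
    rw [hdet2]
    exact mul_pos (by positivity) hKL.det_pos
  constructor
  · intro h
    apply main_lemma hK hL
    have : Real.sqrt K.det * Real.sqrt L.det = ((K + L) / 2).det := by
      rw [bhattacharyya, mul_inv_eq_one₀ hdetpos.ne'] at h
      linarith [h]
    exact this.symm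
  · intro h
    subst h
    have : (K + K) / 2 = K := by
      rw [div_two_eq]
      ext i j
      simp [Matrix.smul_apply]
      ring
    rw [bhattacharyya, this, Real.mul_self_sqrt hK.det_pos.le,
      mul_inv_cancel₀ hK.det_pos.ne']
end

section
/- The Bhattacharyya kernel is a positive semidefinite kernel on symmetric positive definite matrices: for any finite family K_1, …, K_m of symmetric positive definite n×n real matrices, the m×m Gram matrix G with G_{ab} = k_B(K_a, K_b) = det(K_a)^{1/2} det(K_b)^{1/2} det((K_a+K_b)/2)^{-1} is positive semidefinite. -/
open MeasureTheory Real Matrix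

lemma posDef_smul_real {n : ℕ} {M : Matrix (Fin n) (Fin n) ℝ} (hM : M.PosDef) {c : ℝ}
    (hc : 0 < c) : (c • M).PosDef := by
  obtain ⟨h1, h2⟩ := hM
  refine Matrix.PosDef.of_dotProduct_mulVec_pos ?_ fun x hx => ?_
  · rw [Matrix.IsHermitian, Matrix.conjTranspose_smul, h1.eq]
    simp
  · have h := Matrix.PosDef.dotProduct_mulVec_pos ⟨h1, h2⟩ hx
    rw [Matrix.smul_mulVec, dotProduct_smul]
    exact mul_pos hc h

lemma matrix_div_two {n : ℕ} (A : Matrix (Fin n) (Fin n) ℝ) : A / 2 = (2:ℝ)⁻¹ • A := by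
  have h2 : (2 : Matrix (Fin n) (Fin n) ℝ) = (2:ℝ) • (1 : Matrix (Fin n) (Fin n) ℝ) := by
    ext i j
    rw [show (2 : Matrix (Fin n) (Fin n) ℝ) = Matrix.diagonal (fun _ => ((2:ℕ):ℝ)) from
      (Matrix.diagonal_natCast 2).symm]
    by_cases h : i = j <;> simp [Matrix.diagonal_apply, h, Matrix.one_apply]
  have hinv : (2 : Matrix (Fin n) (Fin n) ℝ)⁻¹ = (2:ℝ)⁻¹ • (1 : Matrix (Fin n) (Fin n) ℝ) := by
    apply Matrix.inv_eq_right_inv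
    rw [h2, Matrix.smul_mul, Matrix.mul_smul, Matrix.one_mul, smul_smul]
    norm_num
  rw [div_eq_mul_inv, hinv, Matrix.mul_smul, Matrix.mul_one]


open scoped MatrixOrder in
lemma gaussian_matrix {n : ℕ} {M : Matrix (Fin n) (Fin n) ℝ} (hM : M.PosDef) :
    Integrable (fun x : Fin n → ℝ => Real.exp (-(x ⬝ᵥ M *ᵥ x))) ∧
    ∫ x : Fin n → ℝ, Real.exp (-(x ⬝ᵥ M *ᵥ x)) = Real.sqrt π ^ n * (Real.sqrt M.det)⁻¹ := by
  classical
  set S := CFC.sqrt M with hSdef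
  have hSS : S * S = M := CFC.sqrt_mul_sqrt_self M hM.posSemidef.nonneg
  have hdetM : 0 < M.det := hM.det_pos
  have hdet2 : S.det ^ 2 = M.det := by rw [← hSS, det_mul, sq]
  have hdetS : S.det ≠ 0 := by
    intro h; rw [← hdet2, h] at hdetM; simp at hdetM
  have habs : |S.det| = Real.sqrt M.det := by rw [← hdet2, Real.sqrt_sq_eq_abs]
  -- quadratic form as sum of squares
  have hsym : Sᵀ = S := by
    have h := (CFC.sqrt_nonneg M).posSemidef.isHermitian.eq
    rwa [Matrix.conjTranspose_eq_transpose_of_trivial] at h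
  have hquad : ∀ x : Fin n → ℝ, x ⬝ᵥ M *ᵥ x = ∑ i, (S *ᵥ x) i ^ 2 := by
    intro x
    rw [← hSS, ← mulVec_mulVec, dotProduct_mulVec, ← mulVec_transpose, hsym]
    simp [dotProduct, sq]
  set f : (Fin n → ℝ) →ₗ[ℝ] (Fin n → ℝ) := Matrix.toLin' S with hf
  have hdetf : LinearMap.det f = S.det := LinearMap.det_toLin' S
  have hfx : ∀ x, f x = S *ᵥ x := fun x => Matrix.toLin'_apply S x
  have hfcont : Continuous f := f.continuous_of_finiteDimensional
  have hmap : Measure.map f volume = ENNReal.ofReal |(LinearMap.det f)⁻¹| • volume :=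
    Measure.map_linearMap_addHaar_pi_eq_smul_addHaar (by rw [hdetf]; exact hdetS) volume
  set g : (Fin n → ℝ) → ℝ := fun y => Real.exp (-∑ i, y i ^ 2) with hg
  have hgprod : ∀ y : Fin n → ℝ, g y = ∏ i, Real.exp (-(y i) ^ 2) := by
    intro y
    show Real.exp (-∑ i, y i ^ 2) = _
    rw [← Real.exp_sum, Finset.sum_neg_distrib]
  have h1d : Integrable (fun x : ℝ => Real.exp (-x ^ 2)) := by
    simpa using integrable_exp_neg_mul_sq one_pos
  have hgi : Integrable g := by
    have := Integrable.fintype_prod (f := fun (_ : Fin n) (x : ℝ) => Real.exp (-x ^ 2))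
      (fun _ => h1d)
    exact this.congr (Filter.EventuallyEq.of_eq (funext fun y => (hgprod y).symm))
  have hgint : (∫ y, g y) = Real.sqrt π ^ n := by
    simp_rw [hgprod]
    rw [MeasureTheory.integral_fintype_prod_volume_eq_pow (ι := Fin n) (fun x : ℝ => Real.exp (-x ^ 2))]
    have : (∫ x : ℝ, Real.exp (-x ^ 2)) = Real.sqrt π := by
      simpa using integral_gaussian 1
    rw [this, Fintype.card_fin]
  have hcomp : ∀ x, g (f x) = Real.exp (-(x ⬝ᵥ M *ᵥ x)) := by
    intro x
    rw [hquad, hg]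
    simp [hfx]
  have hgm : Integrable g (Measure.map f volume) := by
    rw [hmap]
    exact hgi.smul_measure ENNReal.ofReal_ne_top
  have hintc : Integrable (g ∘ f) volume :=
    (integrable_map_measure hgm.aestronglyMeasurable hfcont.measurable.aemeasurable).mp hgm
  have hint : Integrable (fun x : Fin n → ℝ => Real.exp (-(x ⬝ᵥ M *ᵥ x))) :=
    hintc.congr (Filter.EventuallyEq.of_eq (funext fun x => hcomp x))
  refine ⟨hint, ?_⟩
  have h1 : ∫ y, g y ∂(Measure.map f volume) = ∫ x, g (f x) :=
    integral_map hfcont.measurable.aemeasurable hgm.aestronglyMeasurable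
  rw [hmap, integral_smul_measure] at h1
  have h2 : (ENNReal.ofReal |(LinearMap.det f)⁻¹|).toReal = (Real.sqrt M.det)⁻¹ := by
    rw [ENNReal.toReal_ofReal (abs_nonneg _), hdetf, abs_inv, habs]
  rw [h2, hgint] at h1
  calc (∫ x : Fin n → ℝ, Real.exp (-(x ⬝ᵥ M *ᵥ x))) = ∫ x, g (f x) := by
        congr 1; funext x; rw [hcomp]
    _ = (Real.sqrt M.det)⁻¹ • Real.sqrt π ^ n := h1.symm
    _ = Real.sqrt π ^ n * (Real.sqrt M.det)⁻¹ := by rw [smul_eq_mul]; ring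


theorem bhattacharyya_gram_posSemidef {n m : ℕ}
    (K : Fin m → Matrix (Fin n) (Fin n) ℝ) (hK : ∀ a, (K a).PosDef) :
    (Matrix.of fun a b : Fin m =>
      Real.sqrt (K a).det * Real.sqrt (K b).det *
        (((K a + K b) / 2).det)⁻¹).PosSemidef := by
  classical
  set G : Matrix (Fin m) (Fin m) ℝ := Matrix.of fun a b : Fin m =>
      Real.sqrt (K a).det * Real.sqrt (K b).det *
        (((K a + K b) / 2).det)⁻¹ with hGdef
  set μ : Measure (Fin n → ℝ) := volume with hμ
  set g : Fin m → (Fin n → ℝ) → ℝ := fun a x => Real.exp (-(x ⬝ᵥ (K a) *ᵥ x) / 2) with hgdef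
  have hD : ∀ a b : Fin m, ((2:ℝ)⁻¹ • (K a + K b)).PosDef := fun a b =>
    posDef_smul_real ((hK a).add (hK b)) (by norm_num)
  have hprod : ∀ a b (x : Fin n → ℝ),
      g a x * g b x = Real.exp (-(x ⬝ᵥ ((2:ℝ)⁻¹ • (K a + K b)) *ᵥ x)) := by
    intro a b x
    show Real.exp _ * Real.exp _ = _
    rw [← Real.exp_add]
    congr 1
    rw [Matrix.smul_mulVec, dotProduct_smul, Matrix.add_mulVec,
      dotProduct_add, smul_eq_mul]
    ring
  have hint : ∀ a b : Fin m, Integrable (fun x => g a x * g b x) μ := by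
    intro a b
    exact (gaussian_matrix (hD a b)).1.congr
      (Filter.EventuallyEq.of_eq (funext fun x => (hprod a b x).symm))
  have hval : ∀ a b : Fin m, (∫ x, g a x * g b x ∂μ)
      = Real.sqrt π ^ n * (Real.sqrt ((2:ℝ)⁻¹ • (K a + K b)).det)⁻¹ := by
    intro a b
    simp only [hprod]
    exact (gaussian_matrix (hD a b)).2
  set c : Fin m → ℝ := fun a => Real.sqrt (K a).det / Real.sqrt π ^ n with hcdef
  set F : Fin m → ((Fin n → ℝ) × (Fin n → ℝ)) → ℝ :=
    fun a z => c a * (g a z.1 * g a z.2) with hFdef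
  have hFmul : ∀ a b (z : (Fin n → ℝ) × (Fin n → ℝ)),
      F a z * F b z = ((c a * c b) * (g a z.1 * g b z.1)) * (g a z.2 * g b z.2) := by
    intro a b z
    show (c a * (g a z.1 * g a z.2)) * (c b * (g b z.1 * g b z.2)) = _
    ring
  have hFint : ∀ a b : Fin m, Integrable (fun z => F a z * F b z) (μ.prod μ) := by
    intro a b
    have h2 := ((hint a b).const_mul (c a * c b)).mul_prod (hint a b)
    exact h2.congr (Filter.EventuallyEq.of_eq (funext fun z => (hFmul a b z).symm))
  have hπpos : (0:ℝ) < Real.sqrt π ^ n := pow_pos (Real.sqrt_pos.2 Real.pi_pos) n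
  have hFval : ∀ a b : Fin m, (∫ z, F a z * F b z ∂(μ.prod μ)) = G a b := by
    intro a b
    have hd : 0 < ((2:ℝ)⁻¹ • (K a + K b)).det := (hD a b).det_pos
    have hsd : 0 < Real.sqrt ((2:ℝ)⁻¹ • (K a + K b)).det := Real.sqrt_pos.2 hd
    calc (∫ z, F a z * F b z ∂(μ.prod μ))
        = ∫ z, ((c a * c b) * (g a z.1 * g b z.1)) * (g a z.2 * g b z.2) ∂(μ.prod μ) := by
          simp only [hFmul]
      _ = (∫ x, (c a * c b) * (g a x * g b x) ∂μ) * (∫ x, g a x * g b x ∂μ) :=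
          integral_prod_mul (fun x => (c a * c b) * (g a x * g b x)) (fun x => g a x * g b x)
      _ = (c a * c b) * (∫ x, g a x * g b x ∂μ) ^ 2 := by
          rw [integral_const_mul]; ring
      _ = G a b := by
          rw [hval a b, hGdef]
          show _ = Real.sqrt (K a).det * Real.sqrt (K b).det * (((K a + K b) / 2).det)⁻¹
          rw [matrix_div_two (K a + K b), hcdef]
          rw [mul_pow, inv_pow, Real.sq_sqrt hd.le]
          have h1 : (Real.sqrt (K a).det / Real.sqrt π ^ n) * (Real.sqrt (K b).det / Real.sqrt π ^ n)
              * ((Real.sqrt π ^ n) ^ 2 * (((2:ℝ)⁻¹ • (K a + K b)).det)⁻¹)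
              = Real.sqrt (K a).det * Real.sqrt (K b).det * (((2:ℝ)⁻¹ • (K a + K b)).det)⁻¹
              * ((Real.sqrt π ^ n) ^ 2 / (Real.sqrt π ^ n) ^ 2) := by
            ring
          rw [h1, div_self (pow_ne_zero 2 hπpos.ne'), mul_one]
  refine Matrix.PosSemidef.of_dotProduct_mulVec_nonneg ?_ ?_
  · rw [Matrix.IsHermitian]
    ext a b
    simp only [Matrix.conjTranspose_apply, Matrix.of_apply, star_trivial, hGdef]
    rw [add_comm (K b) (K a)]
    ring
  · intro x
    have expand : x ⬝ᵥ G *ᵥ x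
        = ∑ a, ∑ b, (x a * x b) * ∫ z, F a z * F b z ∂(μ.prod μ) := by
      simp only [dotProduct, Matrix.mulVec, Matrix.of_apply, Finset.mul_sum, hGdef]
      refine Finset.sum_congr rfl fun a _ => Finset.sum_congr rfl fun b _ => ?_
      rw [hFval a b, hGdef]
      simp only [Matrix.of_apply]
      ring
    have hint2 : ∀ (a b : Fin m), Integrable (fun z => (x a * F a z) * (x b * F b z)) (μ.prod μ) := by
      intro a b
      exact ((hFint a b).const_mul (x a * x b)).congr
        (Filter.EventuallyEq.of_eq (funext fun z => by ring))
    have swap : ∑ a, ∑ b, (x a * x b) * ∫ z, F a z * F b z ∂(μ.prod μ)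
        = ∫ z, (∑ a, x a * F a z) ^ 2 ∂(μ.prod μ) := by
      calc ∑ a, ∑ b, (x a * x b) * ∫ z, F a z * F b z ∂(μ.prod μ)
          = ∑ a, ∑ b, ∫ z, (x a * F a z) * (x b * F b z) ∂(μ.prod μ) := by
            refine Finset.sum_congr rfl fun a _ => Finset.sum_congr rfl fun b _ => ?_
            rw [← integral_const_mul]
            congr 1
            funext z
            ring
        _ = ∑ a, ∫ z, ∑ b, (x a * F a z) * (x b * F b z) ∂(μ.prod μ) := by
            refine Finset.sum_congr rfl fun a _ => ?_
            rw [integral_finset_sum _ (fun b _ => hint2 a b)]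
        _ = ∫ z, ∑ a, ∑ b, (x a * F a z) * (x b * F b z) ∂(μ.prod μ) := by
            rw [integral_finset_sum _ (fun a _ => integrable_finset_sum _ (fun b _ => hint2 a b))]
        _ = ∫ z, (∑ a, x a * F a z) ^ 2 ∂(μ.prod μ) := by
            congr 1
            funext z
            rw [sq, Finset.sum_mul_sum]
    have hstar : star x = x := star_trivial x
    rw [hstar, expand, swap]
    exact integral_nonneg fun z => sq_nonneg _
end
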